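/- Let β ≥ 0 and 0 < μ ≤ 1. For every complex λ with Re(λ) > 0, one has Re((λ + β)^μ) > β^μ, i.e. Re((λ+β)^μ - β^μ) > 0. -/

import Mathlib

open Real Set

private lemma cos_pos_aux {θ : ℝ} (hθ0 : 0 ≤ θ) (hθ : θ < π / 2) {t : ℝ}
    (ht : t ∈ Icc (0:ℝ) 1) : 0 < Real.cos (t * θ) := by
  apply Real.cos_pos_of_mem_Ioo
  constructor
  · have : (0:ℝ) ≤ t * θ := mul_nonneg ht.1 hθ0
    linarith [Real.pi_div_two_pos]
  · calc t * θ ≤ 1 * θ := by nlinarith [ht.2]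
      _ < π / 2 := by linarith

private lemma concave_log_cos {θ : ℝ} (hθ0 : 0 ≤ θ) (hθ : θ < π / 2) :
    ConcaveOn ℝ (Icc (0:ℝ) 1) (fun t => Real.log (Real.cos (t * θ))) := by
  have hIoo : ∀ t ∈ interior (Icc (0:ℝ) 1), t ∈ Icc (0:ℝ) 1 := fun t ht =>
    interior_subset ht
  refine concaveOn_of_hasDerivWithinAt2_nonpos (f' := fun t => -θ * Real.tan (t * θ))
    (f'' := fun t => -θ * (θ / Real.cos (t * θ) ^ 2)) (convex_Icc 0 1) ?_ ?_ ?_ ?_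
  · apply ContinuousOn.log
    · exact (Real.continuous_cos.comp (continuous_id.mul continuous_const)).continuousOn
    · exact fun t ht => (cos_pos_aux hθ0 hθ ht).ne'
  · intro x hx
    have hcos := cos_pos_aux hθ0 hθ (hIoo x hx)
    have h1 : HasDerivAt (fun t : ℝ => t * θ) θ x := by
      simpa using (hasDerivAt_id x).mul_const θ
    have h2 : HasDerivAt (fun t : ℝ => Real.cos (t * θ)) (-Real.sin (x * θ) * θ) x :=
      by have := (Real.hasDerivAt_cos (x * θ)).comp x h1; exact this
    have h3 : HasDerivAt (fun t : ℝ => Real.log (Real.cos (t * θ)))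
        (-Real.sin (x * θ) * θ / Real.cos (x * θ)) x :=
      by have := (Real.hasDerivAt_log hcos.ne').comp x h2; exact this.congr_deriv (by ring)
    have : -Real.sin (x * θ) * θ / Real.cos (x * θ) = -θ * Real.tan (x * θ) := by
      rw [Real.tan_eq_sin_div_cos]; ring
    rw [this] at h3
    exact h3.hasDerivWithinAt
  · intro x hx
    have hcos := cos_pos_aux hθ0 hθ (hIoo x hx)
    have h1 : HasDerivAt (fun t : ℝ => t * θ) θ x := by
      simpa using (hasDerivAt_id x).mul_const θ
    have h2 : HasDerivAt (fun t : ℝ => Real.tan (t * θ))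
        (1 / Real.cos (x * θ) ^ 2 * θ) x :=
      by have := (Real.hasDerivAt_tan hcos.ne').comp x h1; exact this
    have h3 : HasDerivAt (fun t : ℝ => -θ * Real.tan (t * θ))
        (-θ * (θ / Real.cos (x * θ) ^ 2)) x := by
      have := h2.const_mul (-θ)
      convert this using 1
      case e'_9 => ring
      all_goals rfl
    exact h3.hasDerivWithinAt
  · intro x hx
    have hcos := cos_pos_aux hθ0 hθ (hIoo x hx)
    have : 0 ≤ θ / Real.cos (x * θ) ^ 2 := div_nonneg hθ0 (by positivity)
    nlinarith

private lemma cos_rpow_le {θ : ℝ} (hθ : |θ| < π / 2) {μ : ℝ} (hμ0 : 0 ≤ μ)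
    (hμ1 : μ ≤ 1) : Real.cos θ ^ μ ≤ Real.cos (μ * θ) := by
  -- reduce to |θ|
  have h1 : Real.cos θ = Real.cos |θ| := (Real.cos_abs θ).symm
  have h2 : Real.cos (μ * θ) = Real.cos (μ * |θ|) := by
    rw [← Real.cos_abs (μ * θ), abs_mul, abs_of_nonneg hμ0]
  rw [h1, h2]
  set a := |θ| with ha
  have ha0 : 0 ≤ a := abs_nonneg θ
  have ha2 : a < π / 2 := hθ
  have hconc := concave_log_cos ha0 ha2
  have key := hconc.2 (show (1:ℝ) ∈ Icc (0:ℝ) 1 by constructor <;> norm_num)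
    (show (0:ℝ) ∈ Icc (0:ℝ) 1 by constructor <;> norm_num)
    hμ0 (show (0:ℝ) ≤ 1 - μ by linarith) (show μ + (1 - μ) = 1 by ring)
  simp only [smul_eq_mul, mul_one, mul_zero, zero_mul, Real.cos_zero, Real.log_one,
    add_zero, one_mul] at key
  -- key : μ * log (cos a) ≤ log (cos (μ * a))
  have hcosa : 0 < Real.cos a := by
    have := cos_pos_aux ha0 ha2 (t := 1) (by constructor <;> norm_num)
    simpa using this
  have hcosμ : 0 < Real.cos (μ * a) := by
    have := cos_pos_aux ha0 ha2 (t := μ) ⟨hμ0, hμ1⟩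
    simpa using this
  have : Real.cos a ^ μ = Real.exp (μ * Real.log (Real.cos a)) := by
    rw [Real.rpow_def_of_pos hcosa, mul_comm]
  rw [this, ← Real.exp_log hcosμ]
  exact Real.exp_le_exp.mpr key

theorem stmt_3 (β μ : ℝ) (hβ : 0 ≤ β) (hμ0 : 0 < μ) (hμ1 : μ ≤ 1)
    (lam : ℂ) (hlam : 0 < lam.re) :
    ((lam + (β : ℂ)) ^ (μ : ℂ)).re > β ^ μ := by
  set z : ℂ := lam + (β : ℂ) with hz
  have hzre : 0 < z.re := by
    simp only [hz, Complex.add_re, Complex.ofReal_re]; linarith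
  have hz0 : z ≠ 0 := fun h => by simp [h] at hzre
  have harg : |Complex.arg z| < π / 2 :=
    Complex.abs_arg_lt_pi_div_two_iff.mpr (Or.inl hzre)
  have habs : 0 < ‖z‖ := norm_pos_iff.mpr hz0
  -- compute real part of z ^ μ
  have hre : (z ^ (μ : ℂ)).re =
      ‖z‖ ^ μ * Real.cos (μ * Complex.arg z) := by
    rw [Complex.cpow_def_of_ne_zero hz0, Complex.exp_re]
    simp only [Complex.mul_re, Complex.mul_im, Complex.log_re, Complex.log_im,
      Complex.ofReal_re, Complex.ofReal_im, mul_zero, sub_zero, zero_mul, add_zero]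
    rw [Real.rpow_def_of_pos habs]
    ring_nf
  rw [hre]
  have hcos : Real.cos (Complex.arg z) = z.re / ‖z‖ := Complex.cos_arg hz0
  have key : Real.cos (Complex.arg z) ^ μ ≤ Real.cos (μ * Complex.arg z) :=
    cos_rpow_le harg hμ0.le hμ1
  have hchain : z.re ^ μ ≤ ‖z‖ ^ μ * Real.cos (μ * Complex.arg z) := by
    have h1 : z.re ^ μ = ‖z‖ ^ μ * Real.cos (Complex.arg z) ^ μ := by
      rw [← Real.mul_rpow habs.le (by rw [hcos]; exact (div_pos hzre habs).le), hcos,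
        mul_div_cancel₀ _ habs.ne']
    rw [h1]
    exact mul_le_mul_of_nonneg_left key (Real.rpow_nonneg habs.le μ)
  have hlt : β ^ μ < z.re ^ μ := by
    apply Real.rpow_lt_rpow hβ _ hμ0
    simp only [hz, Complex.add_re, Complex.ofReal_re]; linarith
  linarith
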